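/- Let L_1, L_2 be nonzero elements of K[∂;δ] of orders r_1 and r_2. Then ord(lclm(L_1, L_2)) = rank(U_{r_1+r_2}) − 1, where U_n is the matrix whose rows are S_n(L_1) stacked above S_n(L_2). -/

import Mathlib

/-
Setting: a differential field `(K, δ)` (δ additive and Leibniz), and the ring
`A = K[∂;δ]` of linear differential operators, axiomatised as follows:
a ring `A`, a ring embedding `ι : K →+* A`, an element `D = ∂` satisfying the
commutation rule `∂ a = a ∂ + δ(a)`, together with the fact that every element
of `A` is uniquely of the form `Σ ι(a_i) ∂^i` (the bijection `e`).
-/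

noncomputable section

variable {K A : Type*}

/-- Order of a differential operator, read off from its coefficient expansion
(`e.symm x` is the finitely supported family of coefficients of `x` w.r.t. the powers `∂^i`). -/
def ordOf [Zero K] (e : (ℕ →₀ K) ≃ A) (x : A) : ℕ :=
  (e.symm x).support.sup id

/-- `φ_n` : the row vector `(a_n, a_{n-1}, ..., a_0)` of an operator of order `≤ n`. -/
def phiV [Zero K] (e : (ℕ →₀ K) ≃ A) (n : ℕ) (x : A) : Fin (n + 1) → K :=
  fun j => e.symm x (n - (j : ℕ))

/-- Inverse of `φ_n` : the operator with coefficient vector `(a_n, ..., a_0)`. -/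
def phiInv [AddCommMonoid K] (e : (ℕ →₀ K) ≃ A) (n : ℕ) (v : Fin (n + 1) → K) : A :=
  e (∑ j : Fin (n + 1), Finsupp.single (n - (j : ℕ)) (v j))

/-- The Sylvester-type matrix `S_n(P)` of an operator `P` of order `m`:
rows are `φ_n(∂^{n-m} P), ..., φ_n(P)`. -/
def Syl [Zero K] [Monoid A] (e : (ℕ →₀ K) ≃ A) (D : A) (n m : ℕ) (P : A) :
    Matrix (Fin (n - m + 1)) (Fin (n + 1)) K :=
  Matrix.of fun i j => phiV e n (D ^ (n - m - (i : ℕ)) * P) j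

/-- The block matrix `M_n` with diagonal blocks `S_n(L_i)` and a last block row
of negated identity matrices `S_n(-1)`. -/
def Mmat [Field K] [Ring A] (e : (ℕ →₀ K) ≃ A) (D : A) {k : ℕ}
    (L : Fin k → A) (r : Fin k → ℕ) (n : ℕ) :
    Matrix ((Σ i : Fin k, Fin (n - r i + 1)) ⊕ Fin (n + 1)) (Fin k × Fin (n + 1)) K :=
  Matrix.of fun row col =>
    match row with
    | Sum.inl ⟨i, a⟩ => if i = col.1 then Syl e D n (r i) (L i) a col.2 else 0
    | Sum.inr a => if (a : ℕ) = (col.2 : ℕ) then -1 else 0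

/-- `M` is a (nonzero) common left multiple of the family `L`. -/
def IsCLM [Ring A] {k : ℕ} (L : Fin k → A) (M : A) : Prop :=
  M ≠ 0 ∧ ∀ i, ∃ Q, M = Q * L i

/-- `M` is a least common left multiple of the family `L`: a common left multiple
of minimal order. -/
def IsLCLM [Field K] [Ring A] (e : (ℕ →₀ K) ≃ A) {k : ℕ} (L : Fin k → A) (M : A) : Prop :=
  IsCLM L M ∧ ∀ M', IsCLM L M' → ordOf e M ≤ ordOf e M'

end
noncomputable section OreAux

variable {K A : Type*}

section Dev

variable [Field K] [Ring A] (ι : K →+* A) (D : A) (e : (ℕ →₀ K) ≃ A)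
variable (he : ∀ f : ℕ →₀ K, e f = f.sum fun i a => ι a * D ^ i)

section basic
include he

lemma e_single (k : ℕ) (a : K) : e (Finsupp.single k a) = ι a * D ^ k := by
  rw [he]; exact Finsupp.sum_single_index (by simp)

lemma e_zero : e 0 = 0 := by rw [he]; simp

lemma e_add (f g : ℕ →₀ K) : e (f + g) = e f + e g := by
  rw [he, he, he]
  exact Finsupp.sum_add_index' (by simp) (by intros; rw [map_add, add_mul])

lemma e_smul (a : K) (f : ℕ →₀ K) : e (a • f) = ι a * e f := by
  rw [he, he, Finsupp.sum_smul_index (by simp), Finsupp.mul_sum]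
  apply Finsupp.sum_congr
  intro i _
  rw [map_mul, mul_assoc]

/-- `e` as an additive equivalence. -/
def eA : (ℕ →₀ K) ≃+ A := { e with map_add' := e_add ι D e he }

lemma eA_symm_apply (x : A) : (eA ι D e he).symm x = e.symm x := rfl

lemma symm_add (x y : A) : e.symm (x + y) = e.symm x + e.symm y := by
  rw [← eA_symm_apply ι D e he, ← eA_symm_apply ι D e he, ← eA_symm_apply ι D e he, map_add]

lemma symm_zero : e.symm (0 : A) = 0 := by
  rw [← eA_symm_apply ι D e he, map_zero]

lemma symm_neg (x : A) : e.symm (-x) = - e.symm x := by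
  rw [← eA_symm_apply ι D e he, ← eA_symm_apply ι D e he, map_neg]

lemma symm_sub (x y : A) : e.symm (x - y) = e.symm x - e.symm y := by
  rw [← eA_symm_apply ι D e he, ← eA_symm_apply ι D e he, ← eA_symm_apply ι D e he, map_sub]

lemma symm_smul (a : K) (x : A) : e.symm (ι a * x) = a • e.symm x := by
  rw [Equiv.symm_apply_eq, e_smul ι D e he, e.apply_symm_apply]

lemma symm_single (k : ℕ) (a : K) : e.symm (ι a * D ^ k) = Finsupp.single k a := by
  rw [Equiv.symm_apply_eq, e_single ι D e he]

lemma eq_zero_of_symm_eq_zero {x : A} (h : e.symm x = 0) : x = 0 := by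
  have := congrArg e h
  rwa [e.apply_symm_apply, e_zero ι D e he] at this

end basic

/-! ### order -/

lemma cf_eq_zero_of_ord_lt {x : A} {i : ℕ} (h : ordOf e x < i) : e.symm x i = 0 := by
  by_contra hne
  have hi : i ∈ (e.symm x).support := Finsupp.mem_support_iff.2 hne
  have : i ≤ ordOf e x := Finset.le_sup (f := id) hi
  omega

lemma ord_le_of_forall {x : A} {n : ℕ} (h : ∀ i, n < i → e.symm x i = 0) :
    ordOf e x ≤ n := by
  apply Finset.sup_le
  intro i hi
  show i ≤ n
  by_contra hlt
  exact (Finsupp.mem_support_iff.1 hi) (h i (by omega))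

include he in
lemma cf_ord_ne_zero {x : A} (hx : x ≠ 0) : e.symm x (ordOf e x) ≠ 0 := by
  have hsupp : (e.symm x).support.Nonempty := by
    rw [Finsupp.support_nonempty_iff]
    intro h0
    exact hx (eq_zero_of_symm_eq_zero ι D e he h0)
  obtain ⟨b, hb, hsup⟩ := Finset.exists_mem_eq_sup _ hsupp id
  rw [ordOf, hsup]
  exact Finsupp.mem_support_iff.1 hb

end Dev


noncomputable section Dev2

variable [Field K] [Ring A] (δ : K →+ K) (ι : K →+* A) (D : A) (e : (ℕ →₀ K) ≃ A)
variable (hcomm : ∀ a : K, D * ι a = ι a * D + ι (δ a))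
variable (he : ∀ f : ℕ →₀ K, e f = f.sum fun i a => ι a * D ^ i)

include he hcomm

lemma D_mul_e (f : ℕ →₀ K) :
    D * e f = e (f.sum fun i a => Finsupp.single (i + 1) a + Finsupp.single i (δ a)) := by
  induction f using Finsupp.induction with
  | zero => simp [e_zero ι D e he]
  | single_add k a f hk ha ih =>
    rw [Finsupp.sum_add_index' (by simp)
          (by intros; simp only [Finsupp.single_add, map_add]; abel),
        e_add ι D e he, e_add ι D e he, mul_add, ih,
        Finsupp.sum_single_index (by simp), e_single ι D e he,
        e_add ι D e he, e_single ι D e he, e_single ι D e he]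
    have : D * (ι a * D ^ k) = (ι a * D + ι (δ a)) * D ^ k := by
      rw [← hcomm, mul_assoc]
    rw [this, add_mul, mul_assoc, ← pow_succ']

lemma cf_D_mul_succ (x : A) (j : ℕ) :
    e.symm (D * x) (j + 1) = e.symm x j + δ (e.symm x (j + 1)) := by
  classical
  conv_lhs => rw [← e.apply_symm_apply x]
  rw [D_mul_e δ ι D e hcomm he, e.symm_apply_apply, Finsupp.sum_apply]
  set f := e.symm x
  have : (f.sum fun i a => (Finsupp.single (i + 1) a + Finsupp.single i (δ a)) (j + 1))
      = (f.sum fun i a => (if i = j then a else 0) + (if i = j + 1 then δ a else 0)) := by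
    apply Finsupp.sum_congr
    intro i _
    rw [Finsupp.add_apply, Finsupp.single_apply, Finsupp.single_apply]
    simp [Nat.succ_inj]
  rw [this]
  unfold Finsupp.sum
  rw [Finset.sum_add_distrib]
  congr 1
  · rw [← Finsupp.sum_ite_self_eq' (N := K) f j]; rfl
  · have := Finsupp.sum_ite_eq' f (j + 1) (fun _ a => δ a)
    unfold Finsupp.sum at this
    rw [this]
    by_cases h : j + 1 ∈ f.support
    · simp [h]
    · simp [h, Finsupp.notMem_support_iff.1 h]

lemma cf_D_mul_zero (x : A) : e.symm (D * x) 0 = δ (e.symm x 0) := by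
  classical
  conv_lhs => rw [← e.apply_symm_apply x]
  rw [D_mul_e δ ι D e hcomm he, e.symm_apply_apply, Finsupp.sum_apply]
  set f := e.symm x
  have : (f.sum fun i a => (Finsupp.single (i + 1) a + Finsupp.single i (δ a)) 0)
      = (f.sum fun i a => (if i = 0 then δ a else 0)) := by
    apply Finsupp.sum_congr
    intro i _
    rw [Finsupp.add_apply, Finsupp.single_apply, Finsupp.single_apply]
    simp
  rw [this]
  have := Finsupp.sum_ite_eq' f 0 (fun _ a => δ a)
  rw [this]
  by_cases h : 0 ∈ f.support
  · simp [h]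
  · simp [h, Finsupp.notMem_support_iff.1 h]

/-- vanishing above the top for `D^k * x` -/
lemma cf_D_pow_mul_of_lt (x : A) (k : ℕ) :
    ∀ i, ordOf e x + k < i → e.symm (D ^ k * x) i = 0 := by
  induction k with
  | zero =>
    intro i hi
    rw [pow_zero, one_mul]
    exact cf_eq_zero_of_ord_lt e (by omega)
  | succ k ih =>
    intro i hi
    rw [pow_succ', mul_assoc]
    obtain ⟨j, rfl⟩ : ∃ j, i = j + 1 := ⟨i - 1, by omega⟩
    rw [cf_D_mul_succ δ ι D e hcomm he, ih j (by omega), ih (j+1) (by omega), map_zero, add_zero]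

lemma cf_D_pow_mul_top (x : A) (k : ℕ) :
    e.symm (D ^ k * x) (ordOf e x + k) = e.symm x (ordOf e x) := by
  induction k with
  | zero => rw [pow_zero, one_mul, Nat.add_zero]
  | succ k ih =>
    rw [pow_succ', mul_assoc, ← Nat.add_assoc, cf_D_mul_succ δ ι D e hcomm he, ih,
        cf_D_pow_mul_of_lt δ ι D e hcomm he x k _ (by omega), map_zero, add_zero]

end Dev2

noncomputable section Dev3

variable [Field K] [Ring A] (δ : K →+ K) (ι : K →+* A) (D : A) (e : (ℕ →₀ K) ≃ A)
variable (hcomm : ∀ a : K, D * ι a = ι a * D + ι (δ a))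
variable (he : ∀ f : ℕ →₀ K, e f = f.sum fun i a => ι a * D ^ i)

include he

lemma mul_expand (x y : A) :
    x * y = (e.symm x).sum fun i a => ι a * (D ^ i * y) := by
  conv_lhs => rw [← e.apply_symm_apply x, he, Finsupp.sum_mul]
  apply Finsupp.sum_congr
  intro i _
  rw [mul_assoc]

lemma symm_finsupp_sum {α M : Type*} [Zero M] (f : α →₀ M) (g : α → M → A) :
    e.symm (f.sum g) = f.sum fun i a => e.symm (g i a) :=
  map_finsuppSum (eA ι D e he).symm f g

lemma cf_mul (x y : A) (j : ℕ) :
    e.symm (x * y) j = (e.symm x).sum fun i a => a * e.symm (D ^ i * y) j := by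
  rw [mul_expand ι D e he x y, symm_finsupp_sum ι D e he, Finsupp.sum_apply]
  apply Finsupp.sum_congr
  intro i _
  rw [symm_smul ι D e he, Finsupp.smul_apply, smul_eq_mul]

include hcomm

lemma cf_mul_of_lt (x y : A) :
    ∀ j, ordOf e x + ordOf e y < j → e.symm (x * y) j = 0 := by
  intro j hj
  rw [cf_mul ι D e he x y j]
  apply Finset.sum_eq_zero
  intro i hi
  dsimp only
  have hile : i ≤ ordOf e x := Finset.le_sup (f := id) hi
  rw [cf_D_pow_mul_of_lt δ ι D e hcomm he y i j (by omega), mul_zero]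

lemma cf_mul_top (x y : A) :
    e.symm (x * y) (ordOf e x + ordOf e y)
      = e.symm x (ordOf e x) * e.symm y (ordOf e y) := by
  rw [cf_mul ι D e he x y]
  unfold Finsupp.sum
  rw [Finset.sum_eq_single (ordOf e x)]
  · dsimp only
    rw [Nat.add_comm (ordOf e x), cf_D_pow_mul_top δ ι D e hcomm he]
  · intro i hi hne
    dsimp only
    have hile : i ≤ ordOf e x := Finset.le_sup (f := id) hi
    rw [cf_D_pow_mul_of_lt δ ι D e hcomm he y i _ (by omega), mul_zero]
  · intro h
    dsimp only
    rw [Finsupp.notMem_support_iff.1 h, zero_mul]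

lemma mul_ne_zero' {x y : A} (hx : x ≠ 0) (hy : y ≠ 0) : x * y ≠ 0 := by
  intro h0
  have := cf_mul_top δ ι D e hcomm he x y
  rw [h0, symm_zero ι D e he, Finsupp.zero_apply] at this
  exact (mul_ne_zero (cf_ord_ne_zero ι D e he hx) (cf_ord_ne_zero ι D e he hy)) this.symm

lemma ord_mul {x y : A} (hx : x ≠ 0) (hy : y ≠ 0) :
    ordOf e (x * y) = ordOf e x + ordOf e y := by
  have hle : ordOf e (x * y) ≤ ordOf e x + ordOf e y :=
    ord_le_of_forall e (cf_mul_of_lt δ ι D e hcomm he x y)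
  have hne : e.symm (x * y) (ordOf e x + ordOf e y) ≠ 0 := by
    rw [cf_mul_top δ ι D e hcomm he]
    exact mul_ne_zero (cf_ord_ne_zero ι D e he hx) (cf_ord_ne_zero ι D e he hy)
  have : ordOf e x + ordOf e y ≤ ordOf e (x * y) :=
    Finset.le_sup (f := id) (Finsupp.mem_support_iff.2 hne)
  omega

/-- Euclidean division on the left by a nonzero operator. -/
lemma div_lemma {y : A} (hy : y ≠ 0) (x : A) :
    ∃ q r : A, x = q * y + r ∧ (r = 0 ∨ ordOf e r < ordOf e y) := by
  suffices H : ∀ n, ∀ x : A, ordOf e x < n →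
      ∃ q r : A, x = q * y + r ∧ (r = 0 ∨ ordOf e r < ordOf e y) by
    exact H (ordOf e x + 1) x (by omega)
  intro n
  induction n using Nat.strong_induction_on with
  | _ n ih =>
    intro x hx
    by_cases hx0 : x = 0
    · exact ⟨0, 0, by rw [hx0, zero_mul, add_zero], Or.inl rfl⟩
    by_cases hord : ordOf e x < ordOf e y
    · exact ⟨0, x, by rw [zero_mul, zero_add], Or.inr hord⟩
    push_neg at hord
    set ox := ordOf e x with hox
    set oy := ordOf e y with hoy
    set b : K := e.symm x ox * (e.symm y oy)⁻¹ with hb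
    set t : A := ι b * (D ^ (ox - oy) * y) with ht
    have hcf_t : ∀ j, ox ≤ j → e.symm t j = e.symm x j := by
      intro j hj
      rw [ht, symm_smul ι D e he, Finsupp.smul_apply, smul_eq_mul]
      rcases Nat.lt_or_ge ox j with hlt | hge
      · rw [cf_D_pow_mul_of_lt δ ι D e hcomm he y _ _ (by omega), mul_zero,
          cf_eq_zero_of_ord_lt e (by omega)]
      · have hj' : j = ox := by omega
        subst hj'
        have heq : oy + (ox - oy) = ox := by omega
        have htop := cf_D_pow_mul_top δ ι D e hcomm he y (ox - oy)
        rw [heq] at htop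
        rw [htop, hb, mul_assoc, inv_mul_cancel₀ (cf_ord_ne_zero ι D e he hy), mul_one]
    set x' : A := x - t with hx'
    have hcf_x' : ∀ j, ox ≤ j → e.symm x' j = 0 := by
      intro j hj
      rw [hx', symm_sub ι D e he, Finsupp.sub_apply, hcf_t j hj, sub_self]
    by_cases hx'0 : x' = 0
    · refine ⟨ι b * D ^ (ox - oy), 0, ?_, Or.inl rfl⟩
      have : x = t := by rw [← sub_eq_zero, ← hx', hx'0]
      rw [this, ht, add_zero, mul_assoc]
    · have hordx' : ordOf e x' < ox := by
        have hle : ordOf e x' ≤ ox := ord_le_of_forall e (fun i hi => hcf_x' i (by omega))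
        have : e.symm x' (ordOf e x') ≠ 0 := cf_ord_ne_zero ι D e he hx'0
        rcases Nat.lt_or_ge (ordOf e x') ox with h | h
        · exact h
        · exact absurd (hcf_x' _ h) this
      obtain ⟨q', r, hqr, hr⟩ := ih ox (by omega) x' hordx'
      refine ⟨ι b * D ^ (ox - oy) + q', r, ?_, hr⟩
      have : x = t + x' := by rw [hx']; abel
      rw [this, hqr, ht, add_mul, mul_assoc, add_assoc]

end Dev3

noncomputable section Dev4

open Submodule

variable [Field K] [Ring A] (δ : K →+ K) (ι : K →+* A) (D : A) (e : (ℕ →₀ K) ≃ A)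
variable (hcomm : ∀ a : K, D * ι a = ι a * D + ι (δ a))
variable (he : ∀ f : ℕ →₀ K, e f = f.sum fun i a => ι a * D ^ i)

/-- The space of (coefficient vectors of) left multiples `Q * P` with `ord Q ≤ s`. -/
def Vsp (P : A) (s : ℕ) : Submodule K (ℕ →₀ K) :=
  Submodule.span K (Set.range fun i : Fin (s + 1) => e.symm (D ^ (i : ℕ) * P))

lemma fd_Vsp (P : A) (s : ℕ) : FiniteDimensional K (Vsp D e P s) :=
  FiniteDimensional.span_of_finite K (Set.finite_range _)

include he

lemma mem_Vsp_of {Q : A} (P : A) {s : ℕ} (hQ : ∀ j, s < j → e.symm Q j = 0) :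
    e.symm (Q * P) ∈ Vsp D e P s := by
  rw [mul_expand ι D e he Q P, symm_finsupp_sum ι D e he]
  unfold Finsupp.sum
  apply Submodule.sum_mem
  intro i hi
  have his : i ≤ s := by
    by_contra h
    exact (Finsupp.mem_support_iff.1 hi) (hQ i (by omega))
  dsimp only
  rw [symm_smul ι D e he]
  exact Submodule.smul_mem _ _ (Submodule.subset_span ⟨⟨i, by omega⟩, rfl⟩)

lemma mem_Vsp_elim {P : A} {s : ℕ} {x : ℕ →₀ K} (hx : x ∈ Vsp D e P s) :
    ∃ Q : A, (∀ j, s < j → e.symm Q j = 0) ∧ x = e.symm (Q * P) := by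
  induction hx using Submodule.span_induction with
  | mem x hxg =>
    obtain ⟨i, rfl⟩ := hxg
    refine ⟨ι (1 : K) * D ^ (i : ℕ), fun j hj => ?_, ?_⟩
    · rw [symm_single ι D e he, Finsupp.single_apply, if_neg (by have := i.is_le; omega)]
    · rw [map_one, one_mul]
  | zero => exact ⟨0, fun j _ => by rw [symm_zero ι D e he]; rfl,
      by rw [zero_mul, symm_zero ι D e he]⟩
  | add x y _ _ ihx ihy =>
    obtain ⟨Q₁, hQ₁, rfl⟩ := ihx
    obtain ⟨Q₂, hQ₂, rfl⟩ := ihy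
    refine ⟨Q₁ + Q₂, fun j hj => ?_, by rw [add_mul, symm_add ι D e he]⟩
    rw [symm_add ι D e he, Finsupp.add_apply, hQ₁ j hj, hQ₂ j hj, add_zero]
  | smul a x _ ihx =>
    obtain ⟨Q, hQ, rfl⟩ := ihx
    refine ⟨ι a * Q, fun j hj => ?_, by rw [mul_assoc, symm_smul ι D e he]⟩
    rw [symm_smul ι D e he, Finsupp.smul_apply, hQ j hj, smul_zero]

include hcomm

lemma li_Vsp {P : A} (hP : P ≠ 0) (s : ℕ) :
    LinearIndependent K (fun i : Fin (s + 1) => e.symm (D ^ (i : ℕ) * P)) := by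
  rw [Fintype.linearIndependent_iff]
  intro g hg
  by_contra hcon
  push_neg at hcon
  obtain ⟨i, hi⟩ := hcon
  classical
  set S : Finset (Fin (s + 1)) := Finset.univ.filter (fun i => g i ≠ 0) with hS
  have hSne : S.Nonempty := ⟨i, by simp [hS, hi]⟩
  set i₀ := S.max' hSne with hi₀
  have hgi₀ : g i₀ ≠ 0 := by
    have hmem : i₀ ∈ S := S.max'_mem hSne
    rw [hS] at hmem
    exact (Finset.mem_filter.1 hmem).2
  have := congrArg (fun v : ℕ →₀ K => v (ordOf e P + (i₀ : ℕ))) hg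
  simp only [Finsupp.coe_zero, Pi.zero_apply] at this
  rw [Finset.sum_apply'] at this
  rw [Finset.sum_eq_single i₀] at this
  · rw [Finsupp.smul_apply, smul_eq_mul, cf_D_pow_mul_top δ ι D e hcomm he] at this
    exact hgi₀ (by
      have hPne := cf_ord_ne_zero ι D e he hP
      exact (mul_eq_zero.1 this).resolve_right hPne)
  · intro b _ hbne
    by_cases hgb : g b = 0
    · rw [hgb, zero_smul]; rfl
    · have hbS : b ∈ S := by simp [hS, hgb]
      have hble : b ≤ i₀ := S.le_max' b hbS
      have hblt : (b : ℕ) < (i₀ : ℕ) := by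
        rcases lt_or_eq_of_le hble with h | h
        · exact h
        · exact absurd h hbne
      rw [Finsupp.smul_apply, cf_D_pow_mul_of_lt δ ι D e hcomm he P _ _ (by omega), smul_zero]
  · intro h
    exact absurd (Finset.mem_univ i₀) h

lemma finrank_Vsp {P : A} (hP : P ≠ 0) (s : ℕ) :
    Module.finrank K (Vsp D e P s) = s + 1 := by
  rw [Vsp, finrank_span_eq_card (li_Vsp δ ι D e hcomm he hP s), Fintype.card_fin]

end Dev4

noncomputable section Dev5

open Submodule Module

variable [Field K] [Ring A] (δ : K →+ K) (ι : K →+* A) (D : A) (e : (ℕ →₀ K) ≃ A)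

lemma range_flip (P : A) (s : ℕ) :
    (Set.range fun i : Fin (s + 1) => e.symm (D ^ (s - (i : ℕ)) * P))
      = Set.range fun i : Fin (s + 1) => e.symm (D ^ (i : ℕ) * P) := by
  ext z
  constructor
  · rintro ⟨i, rfl⟩
    exact ⟨⟨s - (i : ℕ), by omega⟩, rfl⟩
  · rintro ⟨i, rfl⟩
    refine ⟨⟨s - (i : ℕ), by omega⟩, ?_⟩
    have hi : (i : ℕ) ≤ s := by have := i.is_le; omega
    show e.symm (D ^ (s - (s - (i : ℕ))) * P) = _
    rw [Nat.sub_sub_self hi]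

end Dev5

end OreAux

set_option maxHeartbeats 1000000 in
set_option synthInstance.maxHeartbeats 400000 in
open Submodule Module in
/-- `ord(lclm(L₁,L₂)) = rank(U_{r₁+r₂}) − 1`, where
`U_n = [S_n(L₁); S_n(L₂)]` (stated additively). -/
theorem ord_lclm_eq_rank_U [Field K] [Ring A]
    (δ : K →+ K) (hLeib : ∀ a b : K, δ (a * b) = a * δ b + δ a * b)
    (ι : K →+* A) (D : A)
    (hcomm : ∀ a : K, D * ι a = ι a * D + ι (δ a))
    (e : (ℕ →₀ K) ≃ A)
    (he : ∀ f : ℕ →₀ K, e f = f.sum fun i a => ι a * D ^ i)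
    (L₁ L₂ : A) (hL₁ : L₁ ≠ 0) (hL₂ : L₂ ≠ 0)
    (r₁ r₂ : ℕ) (hr₁ : ordOf e L₁ = r₁) (hr₂ : ordOf e L₂ = r₂)
    (Lc : A) (hLc : IsLCLM e ![L₁, L₂] Lc) :
    ordOf e Lc + 1 =
      (Matrix.of (Sum.elim (Syl e D (r₁ + r₂) r₁ L₁) (Syl e D (r₁ + r₂) r₂ L₂)) :
        Matrix (Fin (r₁ + r₂ - r₁ + 1) ⊕ Fin (r₁ + r₂ - r₂ + 1))
          (Fin (r₁ + r₂ + 1)) K).rank := by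
  classical
  obtain ⟨⟨hLc0, hmul⟩, hmin⟩ := hLc
  obtain ⟨Qc₁, hQc₁⟩ := hmul 0
  obtain ⟨Qc₂, hQc₂⟩ := hmul 1
  rw [Matrix.cons_val_zero] at hQc₁
  rw [Matrix.cons_val_one, Matrix.cons_val_zero] at hQc₂
  set n := r₁ + r₂ with hn
  set d := ordOf e Lc with hd
  have hQc₁0 : Qc₁ ≠ 0 := fun h => hLc0 (by rw [hQc₁, h, zero_mul])
  have hQc₂0 : Qc₂ ≠ 0 := fun h => hLc0 (by rw [hQc₂, h, zero_mul])
  have hdc₁ : d = ordOf e Qc₁ + r₁ := by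
    rw [hd, hQc₁, ord_mul δ ι D e hcomm he hQc₁0 hL₁, hr₁]
  have hdc₂ : d = ordOf e Qc₂ + r₂ := by
    rw [hd, hQc₂, ord_mul δ ι D e hcomm he hQc₂0 hL₂, hr₂]
  have h1A : (1 : A) ≠ 0 := by
    intro h
    apply hL₁
    calc L₁ = L₁ * 1 := (mul_one _).symm
      _ = 0 := by rw [h, mul_zero]
  haveI := fd_Vsp D e L₁ (n - r₁)
  haveI := fd_Vsp D e L₂ (n - r₂)
  haveI := fd_Vsp D e (1 : A) n
  haveI := fd_Vsp D e Lc (n - d)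
  -- membership in the big space W
  have hVW : ∀ (P : A) (s : ℕ), ordOf e P + s ≤ n → Vsp D e P s ≤ Vsp D e 1 n := by
    intro P s hs
    rw [Vsp, Submodule.span_le]
    rintro _ ⟨i, rfl⟩
    have hmem : e.symm ((D ^ (i : ℕ) * P) * 1) ∈ Vsp D e 1 n := by
      apply mem_Vsp_of ι D e he
      intro j hj
      apply cf_D_pow_mul_of_lt δ ι D e hcomm he
      have := i.is_le
      omega
    rwa [mul_one] at hmem
  have hV₁W : Vsp D e L₁ (n - r₁) ≤ Vsp D e 1 n := hVW L₁ (n - r₁) (by rw [hr₁]; omega)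
  have hV₂W : Vsp D e L₂ (n - r₂) ≤ Vsp D e 1 n := hVW L₂ (n - r₂) (by rw [hr₂]; omega)
  -- dimension count
  have hdim₁ : finrank K (Vsp D e L₁ (n - r₁)) = (n - r₁) + 1 :=
    finrank_Vsp δ ι D e hcomm he hL₁ _
  have hdim₂ : finrank K (Vsp D e L₂ (n - r₂)) = (n - r₂) + 1 :=
    finrank_Vsp δ ι D e hcomm he hL₂ _
  have hdimW : finrank K (Vsp D e (1 : A) n) = n + 1 :=
    finrank_Vsp δ ι D e hcomm he h1A n
  have hkey := Submodule.finrank_sup_add_finrank_inf_eq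
    (Vsp D e L₁ (n - r₁)) (Vsp D e L₂ (n - r₂))
  have hsuple : finrank K ↥(Vsp D e L₁ (n - r₁) ⊔ Vsp D e L₂ (n - r₂)) ≤ n + 1 := by
    rw [← hdimW]
    exact Submodule.finrank_mono (sup_le hV₁W hV₂W)
  have hinfpos : 0 < finrank K ↥(Vsp D e L₁ (n - r₁) ⊓ Vsp D e L₂ (n - r₂)) := by omega
  haveI : Nontrivial ↥(Vsp D e L₁ (n - r₁) ⊓ Vsp D e L₂ (n - r₂)) :=
    Module.nontrivial_of_finrank_pos hinfpos
  obtain ⟨y, hy0⟩ := exists_ne (0 : ↥(Vsp D e L₁ (n - r₁) ⊓ Vsp D e L₂ (n - r₂)))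
  obtain ⟨Q₁, hb₁, hyQ₁⟩ := mem_Vsp_elim ι D e he (Submodule.mem_inf.1 y.2).1
  obtain ⟨Q₂, hb₂, hyQ₂⟩ := mem_Vsp_elim ι D e he (Submodule.mem_inf.1 y.2).2
  set z := e (y : ℕ →₀ K) with hzdef
  have hz1 : z = Q₁ * L₁ := by rw [hzdef, hyQ₁, e.apply_symm_apply]
  have hz2 : z = Q₂ * L₂ := by rw [hzdef, hyQ₂, e.apply_symm_apply]
  have hz0 : z ≠ 0 := by
    intro h
    apply hy0
    apply Subtype.ext
    have h2 : (y : ℕ →₀ K) = e.symm 0 := by rw [← h, hzdef, e.symm_apply_apply]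
    rw [h2, symm_zero ι D e he]
    rfl
  have hQ₁0 : Q₁ ≠ 0 := fun h => hz0 (by rw [hz1, h, zero_mul])
  have hdn : d ≤ n := by
    have hCLM : IsCLM ![L₁, L₂] z := by
      refine ⟨hz0, fun i => ?_⟩
      fin_cases i
      · exact ⟨Q₁, by simpa using hz1⟩
      · exact ⟨Q₂, by simpa using hz2⟩
    have h1 := hmin z hCLM
    have h2 : ordOf e z = ordOf e Q₁ + r₁ := by
      rw [hz1, ord_mul δ ι D e hcomm he hQ₁0 hL₁, hr₁]
    have h3 : ordOf e Q₁ ≤ n - r₁ := ord_le_of_forall e hb₁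
    omega
  -- the lclm left-divides every common left multiple
  have hfac : ∀ x : A, (∃ q₁, x = q₁ * L₁) → (∃ q₂, x = q₂ * L₂) → ∃ q, x = q * Lc := by
    rintro x ⟨q₁, hq1⟩ ⟨q₂, hq2⟩
    obtain ⟨q, r, hqr, hror⟩ := div_lemma δ ι D e hcomm he hLc0 x
    by_cases hr0 : r = 0
    · exact ⟨q, by rw [hqr, hr0, add_zero]⟩
    · exfalso
      have hrlt : ordOf e r < d := hror.resolve_left hr0
      have hre : r = x - q * Lc := by rw [hqr]; abel
      have hCLM : IsCLM ![L₁, L₂] r := by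
        refine ⟨hr0, fun i => ?_⟩
        fin_cases i
        · refine ⟨q₁ - q * Qc₁, ?_⟩
          show r = (q₁ - q * Qc₁) * L₁
          rw [hre, sub_mul, hq1, mul_assoc, ← hQc₁]
        · refine ⟨q₂ - q * Qc₂, ?_⟩
          show r = (q₂ - q * Qc₂) * L₂
          rw [hre, sub_mul, hq2, mul_assoc, ← hQc₂]
      have := hmin r hCLM
      omega
  -- the intersection is the space of multiples of Lc
  have hinf_eq : Vsp D e L₁ (n - r₁) ⊓ Vsp D e L₂ (n - r₂) = Vsp D e Lc (n - d) := by
    apply le_antisymm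
    · rintro x hx
      obtain ⟨P₁, hbb₁, hxP₁⟩ := mem_Vsp_elim ι D e he (Submodule.mem_inf.1 hx).1
      obtain ⟨P₂, hbb₂, hxP₂⟩ := mem_Vsp_elim ι D e he (Submodule.mem_inf.1 hx).2
      have hPP : P₁ * L₁ = P₂ * L₂ := e.symm.injective (by rw [← hxP₁, ← hxP₂])
      obtain ⟨q, hqz⟩ := hfac (P₁ * L₁) ⟨P₁, rfl⟩ ⟨P₂, hPP⟩
      by_cases hx0 : P₁ * L₁ = 0
      · rw [hxP₁, hx0, symm_zero ι D e he]
        exact Submodule.zero_mem _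
      · have hq0 : q ≠ 0 := fun h => hx0 (by rw [hqz, h, zero_mul])
        have hP₁0 : P₁ ≠ 0 := fun h => hx0 (by rw [h, zero_mul])
        have hoz : ordOf e (P₁ * L₁) = ordOf e P₁ + r₁ := by
          rw [ord_mul δ ι D e hcomm he hP₁0 hL₁, hr₁]
        have hoz' : ordOf e (P₁ * L₁) = ordOf e q + d := by
          rw [hqz, ord_mul δ ι D e hcomm he hq0 hLc0, hd]
        have hoP₁ : ordOf e P₁ ≤ n - r₁ := ord_le_of_forall e hbb₁
        rw [hxP₁, hqz]
        apply mem_Vsp_of ι D e he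
        intro j hj
        apply cf_eq_zero_of_ord_lt e
        omega
    · rw [Vsp, Submodule.span_le]
      rintro _ ⟨i, rfl⟩
      dsimp only
      rw [SetLike.mem_coe, Submodule.mem_inf]
      constructor
      · have hmem : e.symm ((D ^ (i : ℕ) * Qc₁) * L₁) ∈ Vsp D e L₁ (n - r₁) := by
          apply mem_Vsp_of ι D e he
          intro j hj
          apply cf_D_pow_mul_of_lt δ ι D e hcomm he
          have := i.is_le
          omega
        rwa [mul_assoc, ← hQc₁] at hmem
      · have hmem : e.symm ((D ^ (i : ℕ) * Qc₂) * L₂) ∈ Vsp D e L₂ (n - r₂) := by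
          apply mem_Vsp_of ι D e he
          intro j hj
          apply cf_D_pow_mul_of_lt δ ι D e hcomm he
          have := i.is_le
          omega
        rwa [mul_assoc, ← hQc₂] at hmem
  have hdiminf : finrank K ↥(Vsp D e L₁ (n - r₁) ⊓ Vsp D e L₂ (n - r₂)) = (n - d) + 1 := by
    rw [hinf_eq]
    exact finrank_Vsp δ ι D e hcomm he hLc0 _
  have hsupr : finrank K ↥(Vsp D e L₁ (n - r₁) ⊔ Vsp D e L₂ (n - r₂)) = d + 1 := by omega
  -- the matrix part
  rw [Matrix.rank_eq_finrank_span_row]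
  unfold Matrix.row
  set Φ : (ℕ →₀ K) →ₗ[K] (Fin (n + 1) → K) :=
    LinearMap.pi (fun j : Fin (n + 1) => Finsupp.lapply (n - (j : ℕ))) with hΦ
  have him : ∀ (P : A) (s : ℕ),
      (Set.range fun i : Fin (s + 1) => Φ (e.symm (D ^ (s - (i : ℕ)) * P)))
        = Φ '' (Set.range fun i : Fin (s + 1) => e.symm (D ^ (i : ℕ) * P)) := by
    intro P s
    rw [← range_flip D e P s, ← Set.range_comp]
    rfl
  have hrow1 : (Matrix.of (Sum.elim (Syl e D n r₁ L₁) (Syl e D n r₂ L₂)) :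
      Matrix (Fin (n - r₁ + 1) ⊕ Fin (n - r₂ + 1)) (Fin (n + 1)) K)
      = Sum.elim (fun i : Fin (n - r₁ + 1) => Φ (e.symm (D ^ ((n - r₁) - (i : ℕ)) * L₁)))
          (fun i : Fin (n - r₂ + 1) => Φ (e.symm (D ^ ((n - r₂) - (i : ℕ)) * L₂))) := rfl
  rw [hrow1, Set.Sum.elim_range, him, him, Submodule.span_union,
    Submodule.span_image, Submodule.span_image, ← Submodule.map_sup]
  have hfr : finrank K ↥(Submodule.map Φ
      (Vsp D e L₁ (n - r₁) ⊔ Vsp D e L₂ (n - r₂))) =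
      finrank K ↥(Vsp D e L₁ (n - r₁) ⊔ Vsp D e L₂ (n - r₂)) := by
    have hinj : Function.Injective
        (Φ.domRestrict (Vsp D e L₁ (n - r₁) ⊔ Vsp D e L₂ (n - r₂))) := by
      rw [injective_iff_map_eq_zero]
      rintro ⟨x, hx⟩ h0
      have h0' : Φ x = 0 := h0
      have hxW : x ∈ Vsp D e (1 : A) n := (sup_le hV₁W hV₂W) hx
      obtain ⟨Q, hbQ, hxQ⟩ := mem_Vsp_elim ι D e he hxW
      rw [mul_one] at hxQ
      have hhi : ∀ j, n < j → x j = 0 := by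
        intro j hj
        rw [hxQ]
        exact hbQ j hj
      have hlo : ∀ j, j ≤ n → x j = 0 := by
        intro j hj
        have h2 := congrFun h0' ⟨n - j, by omega⟩
        simp only [hΦ, LinearMap.pi_apply, Finsupp.lapply_apply, Pi.zero_apply] at h2
        have h3 : n - ((⟨n - j, by omega⟩ : Fin (n + 1)) : ℕ) = j := by
          simp only []
          omega
        rwa [h3] at h2
      have hx0 : x = 0 := by
        ext j
        rcases le_or_gt j n with hj | hj
        · rw [hlo j hj]; rfl
        · rw [hhi j hj]; rfl
      exact Subtype.ext hx0
    have hrange_eq : LinearMap.range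
        (Φ.domRestrict (Vsp D e L₁ (n - r₁) ⊔ Vsp D e L₂ (n - r₂)))
        = Submodule.map Φ (Vsp D e L₁ (n - r₁) ⊔ Vsp D e L₂ (n - r₂)) :=
      LinearMap.range_domRestrict _ _
    exact ((LinearEquiv.ofInjective _ hinj).trans
      (LinearEquiv.ofEq _ _ hrange_eq)).finrank_eq.symm
  show d + 1 = finrank K ↥(Submodule.map Φ
      (Vsp D e L₁ (n - r₁) ⊔ Vsp D e L₂ (n - r₂)))
  rw [hfr, hsupr]
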